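/- Let W be a tournament kernel on a probability space (S, μ). Then the following are equivalent: (1) W is irreducible; (2) W is strongly connected, i.e. for μ-a.e. x ∈ S the set A(x) = ⋃_{m≥1} N^m({x}) satisfies μ(A(x)) = 1; (3) there does not exist a measurable set B ⊆ S with 0 < μ(B) < 1 such that μ(N(B) ∖ B) = 0; (4) there does not exist a measurable set B ⊆ S with 0 < μ(B) < 1 such that ∫_{B×S} W(x,y) dμ(x)dμ(y) = μ(B)²/2. -/

import Mathlib

open MeasureTheory

/-- A tournament kernel on a probability space `(S, μ)`. -/
def IsTournamentKernel {S : Type*} [MeasurableSpace S] (μ : Measure S)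
    (W : S → S → ℝ) : Prop :=
  Measurable (Function.uncurry W) ∧ (∀ x y : S, 0 ≤ W x y ∧ W x y ≤ 1) ∧
  (∀ᵐ p ∂(μ.prod μ), W p.1 p.2 + W p.2 p.1 = 1)

/-- The out-neighbourhood of a set: `N(B) = {y : ∫_B W(x,y) dμ(x) > 0}`. -/
def kernelN {S : Type*} [MeasurableSpace S] (μ : Measure S) (W : S → S → ℝ)
    (B : Set S) : Set S :=
  {y : S | 0 < ∫ x in B, W x y ∂μ}

/-- The out-neighbourhood of a point: `N({x}) = {y : W(x,y) > 0}`. -/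
def kernelNpt {S : Type*} (W : S → S → ℝ) (x : S) : Set S := {y : S | 0 < W x y}

namespace TKaux

open Function Set

set_option linter.unusedSectionVars false
set_option linter.unusedVariables false

variable {S : Type*} [MeasurableSpace S] {μ : Measure S} [IsProbabilityMeasure μ]
  {W : S → S → ℝ}

lemma nn (hW : IsTournamentKernel μ W) (x y : S) : 0 ≤ W x y := (hW.2.1 x y).1
lemma le1 (hW : IsTournamentKernel μ W) (x y : S) : W x y ≤ 1 := (hW.2.1 x y).2

lemma meas_right (hW : IsTournamentKernel μ W) (y : S) : Measurable fun x => W x y :=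
  hW.1.comp (measurable_id.prodMk measurable_const)

lemma meas_left (hW : IsTournamentKernel μ W) (x : S) : Measurable (W x) :=
  hW.1.comp (measurable_const.prodMk measurable_id)

lemma integrable_right (hW : IsTournamentKernel μ W) (y : S) :
    Integrable (fun x => W x y) μ :=
  (integrable_const 1).mono' (meas_right hW y).aestronglyMeasurable
    (Filter.Eventually.of_forall fun x => by
      rw [Real.norm_eq_abs, abs_of_nonneg (nn hW x y)]; exact le1 hW x y)

lemma setInt_nonneg (hW : IsTournamentKernel μ W) (A : Set S) (y : S) :
    0 ≤ ∫ x in A, W x y ∂μ :=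
  integral_nonneg fun x => nn hW x y

lemma setInt_eq_zero_iff (hW : IsTournamentKernel μ W) {A : Set S} (hA : MeasurableSet A)
    (y : S) : (∫ x in A, W x y ∂μ) = 0 ↔ μ ({x | 0 < W x y} ∩ A) = 0 := by
  rw [integral_eq_zero_iff_of_nonneg_ae (Filter.Eventually.of_forall fun x => nn hW x y)
    ((integrable_right hW y).restrict), Filter.EventuallyEq, ae_iff]
  have hset : {a | ¬ W a y = (0:S→ℝ) a} = {x | 0 < W x y} := by
    ext x; simp only [Set.mem_setOf_eq, Pi.zero_apply]
    exact ⟨fun h => (nn hW x y).lt_of_ne (Ne.symm h), fun h => ne_of_gt h⟩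
  rw [hset, Measure.restrict_apply (measurableSet_lt measurable_const (meas_right hW y))]

lemma not_mem_kernelN_iff (hW : IsTournamentKernel μ W) {A : Set S} (hA : MeasurableSet A)
    (y : S) : y ∉ kernelN μ W A ↔ μ ({x | 0 < W x y} ∩ A) = 0 := by
  rw [← setInt_eq_zero_iff hW hA y]
  simp only [kernelN, Set.mem_setOf_eq, not_lt]
  exact ⟨fun h => le_antisymm h (setInt_nonneg hW A y), fun h => le_of_eq h⟩

lemma kernelN_mono_null (hW : IsTournamentKernel μ W) {A B : Set S} (hB : MeasurableSet B)
    (h : μ (A \ B) = 0) : kernelN μ W A ⊆ kernelN μ W B := by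
  intro y hy
  have h1 : (∫ x in A, W x y ∂μ) ≤ ∫ x in B ∪ A, W x y ∂μ :=
    setIntegral_mono_set ((integrable_right hW y).restrict)
      (Filter.Eventually.of_forall fun x => nn hW x y)
      (Filter.Eventually.of_forall fun x hx => Set.mem_union_right _ hx)
  have h2 : (∫ x in B ∪ A, W x y ∂μ) = ∫ x in B, W x y ∂μ := by
    refine setIntegral_congr_set ?_
    rw [MeasureTheory.ae_eq_set]
    refine ⟨?_, by simp [Set.diff_eq_empty.mpr Set.subset_union_left]⟩
    rw [Set.union_diff_left]
    exact h
  have hy' : 0 < ∫ x in A, W x y ∂μ := hy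
  show 0 < ∫ x in B, W x y ∂μ
  calc (0:ℝ) < ∫ x in A, W x y ∂μ := hy'
    _ ≤ ∫ x in B ∪ A, W x y ∂μ := h1
    _ = _ := h2

lemma kernelN_iUnion_subset (hW : IsTournamentKernel μ W) {A : ℕ → Set S}
    (hA : ∀ m, MeasurableSet (A m)) :
    kernelN μ W (⋃ m, A m) ⊆ ⋃ m, kernelN μ W (A m) := by
  intro y hy
  by_contra hmem
  simp only [Set.mem_iUnion, not_exists] at hmem
  have hz : ∀ m, μ ({x | 0 < W x y} ∩ A m) = 0 :=
    fun m => (not_mem_kernelN_iff hW (hA m) y).mp (hmem m)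
  have h0 : μ ({x | 0 < W x y} ∩ ⋃ m, A m) = 0 := by
    rw [Set.inter_iUnion]; exact measure_iUnion_null hz
  have : (∫ x in ⋃ m, A m, W x y ∂μ) = 0 :=
    (setInt_eq_zero_iff hW (MeasurableSet.iUnion hA) y).mpr h0
  exact absurd this (ne_of_gt hy)

lemma measurable_setIntegral (hW : IsTournamentKernel μ W) {B : Set S}
    (hB : MeasurableSet B) : Measurable fun y => ∫ x in B, W x y ∂μ := by
  have heq : (fun y => ∫ x in B, W x y ∂μ)
      = fun y => ∫ x, (Set.univ ×ˢ B).indicator (fun p : S × S => W p.2 p.1) (y, x) ∂μ := by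
    funext y
    rw [← integral_indicator hB]
    congr 1; funext x
    by_cases hx : x ∈ B <;> simp [Set.indicator, hx]
  rw [heq]
  have hm : StronglyMeasurable ((Set.univ ×ˢ B).indicator fun p : S × S => W p.2 p.1) :=
    ((hW.1.comp measurable_swap).indicator (MeasurableSet.univ.prod hB)).stronglyMeasurable
  exact hm.integral_prod_right'.measurable

lemma measurableSet_kernelN (hW : IsTournamentKernel μ W) {B : Set S}
    (hB : MeasurableSet B) : MeasurableSet (kernelN μ W B) :=
  measurableSet_lt measurable_const (measurable_setIntegral hW hB)

lemma measurableSet_kernelNpt (hW : IsTournamentKernel μ W) (x : S) :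
    MeasurableSet (kernelNpt W x) :=
  measurableSet_lt measurable_const (meas_left hW x)

/-- The "escape set" of `B`: pairs in `B × Bᶜ` along which `W` is positive. -/
def Tset (W : S → S → ℝ) (B : Set S) : Set (S × S) := (B ×ˢ Bᶜ) ∩ {p | 0 < W p.1 p.2}

lemma measTset (hW : IsTournamentKernel μ W) {B : Set S} (hB : MeasurableSet B) :
    MeasurableSet (Tset W B) :=
  (hB.prod hB.compl).inter (measurableSet_lt measurable_const hW.1)

lemma ae_swap {P : S × S → Prop} (h : ∀ᵐ p ∂μ.prod μ, P p) :
    ∀ᵐ p ∂μ.prod μ, P p.swap :=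
  (Measure.measurePreserving_swap (μ := μ) (ν := μ)).quasiMeasurePreserving.ae h

lemma integrable_prod (hW : IsTournamentKernel μ W) :
    Integrable (fun p : S × S => W p.1 p.2) (μ.prod μ) :=
  (integrable_const 1).mono' hW.1.aestronglyMeasurable
    (Filter.Eventually.of_forall fun p => by
      rw [Real.norm_eq_abs, abs_of_nonneg (nn hW _ _)]; exact le1 hW _ _)

lemma integrable_prod_swap (hW : IsTournamentKernel μ W) :
    Integrable (fun p : S × S => W p.2 p.1) (μ.prod μ) :=
  (integrable_const 1).mono' (hW.1.comp measurable_swap).aestronglyMeasurable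
    (Filter.Eventually.of_forall fun p => by
      rw [Real.norm_eq_abs, abs_of_nonneg (nn hW _ _)]; exact le1 hW _ _)

lemma double_eq (hW : IsTournamentKernel μ W) {B : Set S} (hB : MeasurableSet B) :
    (∫ x in B, ∫ y, W x y ∂μ ∂μ)
      = (∫ p in B ×ˢ B, W p.1 p.2 ∂μ.prod μ) + ∫ p in B ×ˢ Bᶜ, W p.1 p.2 ∂μ.prod μ := by
  have hprod : (μ.restrict B).prod μ = (μ.prod μ).restrict (B ×ˢ Set.univ) := by
    rw [← Measure.prod_restrict, Measure.restrict_univ]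
  have hint : Integrable (Function.uncurry W) ((μ.restrict B).prod μ) := by
    rw [hprod]; exact (integrable_prod hW).restrict
  have h1 : (∫ x in B, ∫ y, W x y ∂μ ∂μ) = ∫ p in B ×ˢ Set.univ, W p.1 p.2 ∂μ.prod μ := by
    rw [MeasureTheory.integral_integral hint, hprod]
  rw [h1]
  have hsplit : (B ×ˢ (Set.univ : Set S)) = (B ×ˢ B) ∪ (B ×ˢ Bᶜ) := by
    rw [← Set.prod_union, Set.union_compl_self]
  rw [hsplit]
  exact setIntegral_union
    (Set.disjoint_left.mpr (by rintro ⟨a, b⟩ ⟨_, hb⟩ ⟨_, hb'⟩; exact hb' hb))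
    (hB.prod hB.compl)
    ((integrable_prod hW).restrict)
    ((integrable_prod hW).restrict)

lemma int_prod_diag (hW : IsTournamentKernel μ W) {B : Set S} (hB : MeasurableSet B) :
    (∫ p in B ×ˢ B, W p.1 p.2 ∂μ.prod μ) = (μ B).toReal ^ 2 / 2 := by
  have hswap : (∫ p in B ×ˢ B, W p.2 p.1 ∂μ.prod μ) = ∫ p in B ×ˢ B, W p.1 p.2 ∂μ.prod μ := by
    have := (Measure.measurePreserving_swap (μ := μ) (ν := μ)).setIntegral_preimage_emb
      MeasurableEquiv.prodComm.measurableEmbedding (fun p : S × S => W p.1 p.2) (B ×ˢ B)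
    rw [Set.preimage_swap_prod] at this
    exact this
  have hadd : (∫ p in B ×ˢ B, (W p.1 p.2 + W p.2 p.1) ∂μ.prod μ)
      = (∫ p in B ×ˢ B, W p.1 p.2 ∂μ.prod μ) + ∫ p in B ×ˢ B, W p.2 p.1 ∂μ.prod μ :=
    integral_add ((integrable_prod hW).restrict)
      ((integrable_prod_swap hW).restrict)
  have hone : (∫ p in B ×ˢ B, (W p.1 p.2 + W p.2 p.1) ∂μ.prod μ) = (μ B).toReal ^ 2 := by
    rw [integral_congr_ae (g := fun _ => (1:ℝ))
      (ae_restrict_of_ae (by filter_upwards [hW.2.2] with p hp using hp))]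
    rw [integral_const]
    simp only [Measure.restrict_apply_univ, smul_eq_mul, mul_one]
    rw [measureReal_restrict_apply_univ, measureReal_def, Measure.prod_prod, ENNReal.toReal_mul, sq]
  rw [hswap] at hadd
  rw [hadd] at hone
  linarith

lemma int_offdiag_zero_iff (hW : IsTournamentKernel μ W) {B : Set S} (hB : MeasurableSet B) :
    (∫ p in B ×ˢ Bᶜ, W p.1 p.2 ∂μ.prod μ) = 0 ↔ (μ.prod μ) (Tset W B) = 0 := by
  have hiff := integral_eq_zero_iff_of_nonneg_ae (μ := (μ.prod μ).restrict (B ×ˢ Bᶜ))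
    (f := fun p : S × S => W p.1 p.2)
    (Filter.Eventually.of_forall fun p => nn hW p.1 p.2)
    ((integrable_prod hW).restrict)
  rw [hiff, Filter.EventuallyEq, ae_iff]
  have hset : {p : S × S | ¬ W p.1 p.2 = (0 : S × S → ℝ) p} = {p : S × S | 0 < W p.1 p.2} := by
    ext p; simp only [Set.mem_setOf_eq, Pi.zero_apply]
    exact ⟨fun h => (nn hW _ _).lt_of_ne (Ne.symm h), fun h => ne_of_gt h⟩
  have hms : MeasurableSet {p : S × S | 0 < W p.1 p.2} := measurableSet_lt measurable_const hW.1
  rw [hset, Measure.restrict_apply hms]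
  rw [show {p : S × S | 0 < W p.1 p.2} ∩ (B ×ˢ Bᶜ) = Tset W B from Set.inter_comm _ _]

lemma closed_iff (hW : IsTournamentKernel μ W) {B : Set S} (hB : MeasurableSet B) :
    μ (kernelN μ W B \ B) = 0 ↔ (μ.prod μ) (Tset W B) = 0 := by
  have hT : MeasurableSet (Tset W B) := measTset hW hB
  rw [Measure.prod_apply_symm hT,
      lintegral_eq_zero_iff (measurable_measure_prodMk_right hT)]
  constructor
  · intro h
    filter_upwards [measure_eq_zero_iff_ae_notMem.mp h] with y hy
    simp only [Pi.zero_apply]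
    by_cases hyB : y ∈ B
    · have hemp : (fun x => (x, y)) ⁻¹' Tset W B = ∅ := by
        ext x
        simp only [Set.mem_preimage, Set.mem_empty_iff_false, iff_false]
        rintro ⟨⟨_, h2'⟩, _⟩
        exact h2' hyB
      rw [hemp, measure_empty]
    · have hyN : y ∉ kernelN μ W B := fun hN => hy ⟨hN, hyB⟩
      have h0 : μ ({x | 0 < W x y} ∩ B) = 0 := (not_mem_kernelN_iff hW hB y).mp hyN
      refine measure_mono_null ?_ h0
      rintro x ⟨⟨hxB, _⟩, hxpos⟩
      exact ⟨hxpos, hxB⟩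
  · intro h
    rw [measure_eq_zero_iff_ae_notMem]
    filter_upwards [h] with y hy
    rintro ⟨hyN, hyB⟩
    simp only [Pi.zero_apply] at hy
    have hsub : ({x | 0 < W x y} ∩ B) ⊆ (fun x => (x, y)) ⁻¹' Tset W B := by
      rintro x ⟨hxpos, hxB⟩
      exact ⟨⟨hxB, hyB⟩, hxpos⟩
    exact (not_mem_kernelN_iff hW hB y).mpr (measure_mono_null hsub hy) hyN

lemma one_iff (hW : IsTournamentKernel μ W) {B : Set S} (hB : MeasurableSet B) :
    (∀ᵐ p ∂μ.prod μ, p.1 ∈ B → p.2 ∈ Bᶜ → W p.1 p.2 = 1)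
      ↔ (μ.prod μ) (Tset W Bᶜ) = 0 := by
  constructor
  · intro h
    have h0 : ∀ᵐ p ∂μ.prod μ, p.1 ∈ B → p.2 ∈ Bᶜ → W p.2 p.1 = 0 := by
      filter_upwards [h, hW.2.2] with p h1 h2 hb hbc
      have := h1 hb hbc
      linarith
    have h1 : ∀ᵐ p ∂μ.prod μ, p.2 ∈ B → p.1 ∈ Bᶜ → W p.1 p.2 = 0 := ae_swap h0
    refine measure_mono_null ?_ (ae_iff.mp h1)
    rintro p ⟨⟨h1', h2'⟩, hpos⟩
    intro himp
    exact (ne_of_gt hpos) (himp (by simpa using h2') h1')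
  · intro h
    have h1 : ∀ᵐ p ∂μ.prod μ, p ∉ Tset W Bᶜ := measure_eq_zero_iff_ae_notMem.mp h
    have h2 : ∀ᵐ p ∂μ.prod μ, p.swap ∉ Tset W Bᶜ := ae_swap h1
    filter_upwards [h2, hW.2.2] with p hp hsum hb hbc
    have hz : ¬ (0 < W p.2 p.1) := fun hpos => hp ⟨⟨hbc, by simpa using hb⟩, hpos⟩
    have h01 := nn hW p.2 p.1
    have h02 := le_of_not_gt hz
    linarith

end TKaux

/-- Characterisation of irreducible tournament kernels. -/
theorem stmt11 {S : Type*} [MeasurableSpace S] (μ : Measure S) [IsProbabilityMeasure μ]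
    (W : S → S → ℝ) (hW : IsTournamentKernel μ W) :
    List.TFAE
      [ -- (1) irreducible
        (¬ ∃ B : Set S, MeasurableSet B ∧ 0 < μ B ∧ μ B < 1 ∧
          ∀ᵐ p ∂(μ.prod μ), p.1 ∈ B → p.2 ∈ Bᶜ → W p.1 p.2 = 1),
        -- (2) strongly connected: `A(x) = ⋃_{m ≥ 1} N^m({x})` has full measure a.e.
        (∀ᵐ x ∂μ, μ (⋃ m : ℕ, (kernelN μ W)^[m] (kernelNpt W x)) = 1),
        -- (3) no intermediate set essentially closed under out-neighbourhoods
        (¬ ∃ B : Set S, MeasurableSet B ∧ 0 < μ B ∧ μ B < 1 ∧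
          μ (kernelN μ W B \ B) = 0),
        -- (4) no set with `∫_{B × S} W = μ(B)² / 2`
        (¬ ∃ B : Set S, MeasurableSet B ∧ 0 < μ B ∧ μ B < 1 ∧
          (∫ x in B, ∫ y, W x y ∂μ ∂μ) = (μ B).toReal ^ 2 / 2) ] := by
  open TKaux in
  have hms : MeasurableSet {p : S × S | 0 < W p.1 p.2} :=
    measurableSet_lt measurable_const hW.1
  tfae_have 1 → 3 := by
    intro h1'
    rintro ⟨B, hB, hb0, hb1, hcl⟩
    refine h1' ⟨Bᶜ, hB.compl, ?_, ?_, ?_⟩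
    · rw [prob_compl_eq_one_sub hB]; exact tsub_pos_iff_lt.mpr hb1
    · rw [prob_compl_eq_one_sub hB]
      exact ENNReal.sub_lt_self ENNReal.one_ne_top one_ne_zero (ne_of_gt hb0)
    · refine (TKaux.one_iff hW hB.compl).mpr ?_
      rw [compl_compl]
      exact (TKaux.closed_iff hW hB).mp hcl
  tfae_have 3 → 1 := by
    intro h3'
    rintro ⟨B, hB, hb0, hb1, hae⟩
    refine h3' ⟨Bᶜ, hB.compl, ?_, ?_, (TKaux.closed_iff hW hB.compl).mpr
      ((TKaux.one_iff hW hB).mp hae)⟩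
    · rw [prob_compl_eq_one_sub hB]; exact tsub_pos_iff_lt.mpr hb1
    · rw [prob_compl_eq_one_sub hB]
      exact ENNReal.sub_lt_self ENNReal.one_ne_top one_ne_zero (ne_of_gt hb0)
  tfae_have 3 → 4 := by
    intro h3'
    rintro ⟨B, hB, hb0, hb1, hint⟩
    refine h3' ⟨B, hB, hb0, hb1, (TKaux.closed_iff hW hB).mpr ?_⟩
    rw [TKaux.double_eq hW hB, TKaux.int_prod_diag hW hB] at hint
    have hz : (∫ p in B ×ˢ Bᶜ, W p.1 p.2 ∂μ.prod μ) = 0 := by linarith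
    exact (TKaux.int_offdiag_zero_iff hW hB).mp hz
  tfae_have 4 → 3 := by
    intro h4'
    rintro ⟨B, hB, hb0, hb1, hcl⟩
    refine h4' ⟨B, hB, hb0, hb1, ?_⟩
    rw [TKaux.double_eq hW hB, TKaux.int_prod_diag hW hB,
      (TKaux.int_offdiag_zero_iff hW hB).mpr ((TKaux.closed_iff hW hB).mp hcl), add_zero]
  tfae_have 3 → 2 := by
    intro h3
    -- the set of "sinks" is null
    have hZm0 : Measurable fun x => μ {y | 0 < W x y} :=
      measurable_measure_prodMk_left hms
    have hZmeas : MeasurableSet {x | μ {y | 0 < W x y} = 0} :=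
      hZm0 (measurableSet_singleton 0)
    set Z : Set S := {x | μ {y | 0 < W x y} = 0} with hZdef
    set U : Set (S × S) := (Z ×ˢ Set.univ) ∩ {p | 0 < W p.1 p.2} with hUdef
    have hUmeas : MeasurableSet U := (hZmeas.prod MeasurableSet.univ).inter hms
    have hUnull : (μ.prod μ) U = 0 := by
      rw [Measure.measure_prod_null hUmeas]
      refine Filter.Eventually.of_forall fun x => ?_
      simp only [Pi.zero_apply]
      by_cases hx : x ∈ Z
      · refine measure_mono_null ?_ hx
        rintro y ⟨⟨_, _⟩, hpos⟩
        exact hpos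
      · have hemp : Prod.mk x ⁻¹' U = ∅ := by
          ext y
          simp only [Set.mem_preimage, Set.mem_empty_iff_false, iff_false]
          rintro ⟨⟨hxZ, _⟩, _⟩
          exact hx hxZ
        rw [hemp, measure_empty]
    have hZnull : μ Z = 0 := by
      by_contra hZne
      have hZpos : 0 < μ Z := pos_iff_ne_zero.mpr hZne
      have hNZ : μ (kernelN μ W Z) = 0 := by
        have hsec : ∀ᵐ y ∂μ, μ ((fun x => (x, y)) ⁻¹' U) = 0 := by
          have h0 : (∫⁻ y, μ ((fun x => (x, y)) ⁻¹' U) ∂μ) = 0 := by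
            rw [← Measure.prod_apply_symm hUmeas]; exact hUnull
          filter_upwards [(lintegral_eq_zero_iff
            (measurable_measure_prodMk_right hUmeas)).mp h0] with y hy
          simpa using hy
        rw [measure_eq_zero_iff_ae_notMem]
        filter_upwards [hsec] with y hy
        intro hyN
        have hsub : {x | 0 < W x y} ∩ Z ⊆ (fun x => (x, y)) ⁻¹' U := by
          rintro x ⟨hpos, hxZ⟩
          exact ⟨⟨hxZ, trivial⟩, hpos⟩
        exact (TKaux.not_mem_kernelN_iff hW hZmeas y).mpr (measure_mono_null hsub hy) hyN
      by_cases hZ1 : μ Z < 1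
      · exact h3 ⟨Z, hZmeas, hZpos, hZ1, measure_mono_null Set.diff_subset hNZ⟩
      · push_neg at hZ1
        have hZ1' : μ Z = 1 := le_antisymm prob_le_one hZ1
        have hZc : μ Zᶜ = 0 := by
          rw [prob_compl_eq_one_sub hZmeas, hZ1', tsub_self]
        have hVnull : (μ.prod μ) (Prod.swap ⁻¹' U) = 0 := by
          rw [← Measure.map_apply measurable_swap hUmeas, Measure.prod_swap]
          exact hUnull
        have hae1 : ∀ᵐ p ∂μ.prod μ, p.1 ∈ Z := by
          rw [ae_iff]
          have hss : {p : S × S | ¬ p.1 ∈ Z} ⊆ Zᶜ ×ˢ (Set.univ : Set S) :=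
            fun p hp => ⟨hp, trivial⟩
          exact measure_mono_null hss (by rw [Measure.prod_prod, hZc, zero_mul])
        have hae2 : ∀ᵐ p ∂μ.prod μ, p.2 ∈ Z := by
          rw [ae_iff]
          have hss : {p : S × S | ¬ p.2 ∈ Z} ⊆ (Set.univ : Set S) ×ˢ Zᶜ :=
            fun p hp => ⟨trivial, hp⟩
          exact measure_mono_null hss (by rw [Measure.prod_prod, hZc, mul_zero])
        have hbad : ∀ᵐ p ∂μ.prod μ, False := by
          filter_upwards [hae1, hae2, measure_eq_zero_iff_ae_notMem.mp hUnull,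
            measure_eq_zero_iff_ae_notMem.mp hVnull, hW.2.2] with p h1 h2 h3' h4 h5
          have w1 : ¬ (0 < W p.1 p.2) := fun hpos => h3' ⟨⟨h1, trivial⟩, hpos⟩
          have w2 : ¬ (0 < W p.2 p.1) := fun hpos => h4 ⟨⟨h2, trivial⟩, hpos⟩
          have n1 := TKaux.nn hW p.1 p.2
          have n2 := TKaux.nn hW p.2 p.1
          have e1 := le_of_not_gt w1
          have e2 := le_of_not_gt w2
          linarith
        have hne : (μ.prod μ) ≠ 0 := IsProbabilityMeasure.ne_zero _
        haveI : (ae (μ.prod μ)).NeBot := ae_neBot.mpr hne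
        obtain ⟨p, hp⟩ := hbad.exists
        exact hp
    filter_upwards [measure_eq_zero_iff_ae_notMem.mp hZnull] with x hx
    have hAm : ∀ m, MeasurableSet ((kernelN μ W)^[m] (kernelNpt W x)) := by
      intro m
      induction m with
      | zero => exact TKaux.measurableSet_kernelNpt hW x
      | succ m ih =>
        rw [Function.iterate_succ_apply']
        exact TKaux.measurableSet_kernelN hW ih
    have hAmeas : MeasurableSet (⋃ m, (kernelN μ W)^[m] (kernelNpt W x)) :=
      MeasurableSet.iUnion hAm
    have hclosed : kernelN μ W (⋃ m, (kernelN μ W)^[m] (kernelNpt W x))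
        ⊆ ⋃ m, (kernelN μ W)^[m] (kernelNpt W x) := by
      refine (TKaux.kernelN_iUnion_subset hW hAm).trans ?_
      intro y hy
      rw [Set.mem_iUnion] at hy ⊢
      obtain ⟨m, hm⟩ := hy
      exact ⟨m + 1, by rw [Function.iterate_succ_apply']; exact hm⟩
    have hpos : 0 < μ (⋃ m, (kernelN μ W)^[m] (kernelNpt W x)) := by
      refine lt_of_lt_of_le (pos_iff_ne_zero.mpr hx) (measure_mono ?_)
      exact Set.subset_iUnion (fun m => (kernelN μ W)^[m] (kernelNpt W x)) 0
    by_contra hne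
    have hlt : μ (⋃ m, (kernelN μ W)^[m] (kernelNpt W x)) < 1 :=
      lt_of_le_of_ne prob_le_one hne
    exact h3 ⟨⋃ m, (kernelN μ W)^[m] (kernelNpt W x), hAmeas, hpos, hlt, by
      rw [Set.diff_eq_empty.mpr hclosed]; exact measure_empty⟩
  tfae_have 2 → 3 := by
    intro h2
    rintro ⟨B, hB, h0, h1, hcl⟩
    have hNB : MeasurableSet (kernelN μ W B) := TKaux.measurableSet_kernelN hW hB
    set C := B ∪ kernelN μ W B with hCdef
    have hCmeas : MeasurableSet C := hB.union hNB
    have hCB : μ (C \ B) = 0 := by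
      rw [hCdef, Set.union_diff_left]
      exact hcl
    have hμC : μ C ≤ μ B := by
      calc μ C ≤ μ (B ∪ (kernelN μ W B \ B)) := measure_mono (by
            rintro y (h | h)
            · exact Or.inl h
            · by_cases hyB : y ∈ B
              · exact Or.inl hyB
              · exact Or.inr ⟨h, hyB⟩)
        _ ≤ μ B + μ (kernelN μ W B \ B) := measure_union_le _ _
        _ = μ B := by rw [hcl, add_zero]
    have hC1 : μ C < 1 := lt_of_le_of_lt hμC h1
    have hCclosed : kernelN μ W C ⊆ C :=
      (TKaux.kernelN_mono_null hW hB hCB).trans Set.subset_union_right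
    set D : Set (S × S) := (B ×ˢ (kernelN μ W B)ᶜ) ∩ {p | 0 < W p.1 p.2} with hDdef
    have hDmeas : MeasurableSet D := (hB.prod hNB.compl).inter hms
    have hDnull : (μ.prod μ) D = 0 := by
      rw [Measure.prod_apply_symm hDmeas]
      have hz : ∀ y, μ ((fun x => (x, y)) ⁻¹' D) = 0 := by
        intro y
        by_cases hyN : y ∈ kernelN μ W B
        · have hemp : (fun x => (x, y)) ⁻¹' D = ∅ := by
            ext x
            simp only [Set.mem_preimage, Set.mem_empty_iff_false, iff_false]
            rintro ⟨⟨_, h2'⟩, _⟩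
            exact h2' hyN
          rw [hemp, measure_empty]
        · have h0' : μ ({x | 0 < W x y} ∩ B) = 0 :=
            (TKaux.not_mem_kernelN_iff hW hB y).mp hyN
          refine measure_mono_null ?_ h0'
          rintro x ⟨⟨hxB, _⟩, hpos⟩
          exact ⟨hpos, hxB⟩
      simp only [hz]
      exact lintegral_zero
    have hsec : ∀ᵐ x ∂μ, μ (Prod.mk x ⁻¹' D) = 0 := by
      filter_upwards [Measure.measure_ae_null_of_prod_null hDnull] with x hx
      simpa using hx
    have hnotB : ∀ᵐ x ∂μ, x ∉ B := by
      filter_upwards [hsec, h2] with x hxD hxA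
      intro hxB
      have hsub : kernelNpt W x \ C ⊆ Prod.mk x ⁻¹' D := by
        rintro y ⟨hy, hyC⟩
        exact ⟨⟨hxB, fun hyN => hyC (Or.inr hyN)⟩, hy⟩
      have h00 : μ (kernelNpt W x \ C) = 0 := measure_mono_null hsub hxD
      have hiter : ∀ m, μ ((kernelN μ W)^[m] (kernelNpt W x) \ C) = 0 := by
        intro m
        induction m with
        | zero => exact h00
        | succ m ih =>
          rw [Function.iterate_succ_apply']
          have hss : kernelN μ W ((kernelN μ W)^[m] (kernelNpt W x)) ⊆ C :=
            (TKaux.kernelN_mono_null hW hCmeas ih).trans hCclosed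
          rw [Set.diff_eq_empty.mpr hss]
          exact measure_empty
      have hbound : μ (⋃ m, (kernelN μ W)^[m] (kernelNpt W x)) ≤ μ C := by
        have hss : (⋃ m, (kernelN μ W)^[m] (kernelNpt W x))
            ⊆ C ∪ ⋃ m, ((kernelN μ W)^[m] (kernelNpt W x) \ C) := by
          intro y hy
          rw [Set.mem_iUnion] at hy
          obtain ⟨m, hm⟩ := hy
          by_cases hyC : y ∈ C
          · exact Or.inl hyC
          · exact Or.inr (Set.mem_iUnion.mpr ⟨m, hm, hyC⟩)
        calc μ _ ≤ μ (C ∪ ⋃ m, ((kernelN μ W)^[m] (kernelNpt W x) \ C)) := measure_mono hss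
          _ ≤ μ C + μ (⋃ m, ((kernelN μ W)^[m] (kernelNpt W x) \ C)) := measure_union_le _ _
          _ = μ C := by rw [measure_iUnion_null hiter, add_zero]
      rw [hxA] at hbound
      exact absurd hbound (not_le.mpr hC1)
    have hB0 : μ B = 0 := by
      have := ae_iff.mp hnotB
      simpa using this
    exact absurd hB0 (ne_of_gt h0)
  tfae_finish
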